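/- arXiv:2407.00780 — 2 statements merged into one kernel-verified Lean document; each statement's English description precedes it below -/
import Mathlib

section
/- Let S(x,λ) = ½(λ + k·g(x))² be the storage function along a trajectory (x(t), λ(t)) of the controlled PDGD system ẋ = -∇f(x) - Dg(x)ᵀλ, λ̇ = -k·Dg(x)·ẋ - (α/2)(λ + k·g(x)). Then Ṡ = -α·S along trajectories, and hence |λ(t) + k·g(x(t))| = |λ(0) + k·g(x(0))|·e^{-αt/2}, so the trajectories converge exponentially to the manifold λ + k·g(x) = 0. -/
/-- Along trajectories of the controlled PDGD system
ẋ = -∇f(x) - λ∇g(x), λ̇ = -k·⟨∇g(x), ẋ⟩ - (α/2)(λ + k·g(x)),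
the storage function S = ½(λ + k·g(x))² satisfies Ṡ = -α·S, and hence
|λ(t) + k·g(x(t))| = |λ(0) + k·g(x(0))|·e^{-αt/2} for t ≥ 0. -/
theorem stmt_4 (n : ℕ) (f g : EuclideanSpace ℝ (Fin n) → ℝ)
    (hf : ContDiff ℝ 1 f) (hg : ContDiff ℝ 1 g)
    (k α : ℝ) (hk : 0 < k) (hα : 0 < α)
    (x : ℝ → EuclideanSpace ℝ (Fin n)) (lam : ℝ → ℝ)
    (hx : Differentiable ℝ x) (hlam : Differentiable ℝ lam)
    (hxdyn : ∀ t : ℝ, deriv x t = -gradient f (x t) - lam t • gradient g (x t))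
    (hlamdyn : ∀ t : ℝ, deriv lam t =
      -k * (inner ℝ (gradient g (x t)) (deriv x t) : ℝ)
        - (α / 2) * (lam t + k * g (x t))) :
    (∀ t : ℝ, deriv (fun s => (1 / 2) * (lam s + k * g (x s)) ^ 2) t =
        -α * ((1 / 2) * (lam t + k * g (x t)) ^ 2)) ∧
    (∀ t : ℝ, 0 ≤ t → |lam t + k * g (x t)| =
        |lam 0 + k * g (x 0)| * Real.exp (-(α * t) / 2)) := by
  set y : ℝ → ℝ := fun s => lam s + k * g (x s) with hy_def
  -- derivative of g ∘ x
  have hgx : ∀ t : ℝ, HasDerivAt (fun s => g (x s))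
      ((inner ℝ (gradient g (x t)) (deriv x t) : ℝ)) t := by
    intro t
    have hgd : HasGradientAt g (gradient g (x t)) (x t) :=
      (hg.differentiable one_ne_zero (x t)).hasGradientAt
    have hxd : HasDerivAt x (deriv x t) t := (hx t).hasDerivAt
    have h := (hgd.hasFDerivAt.comp_hasDerivAt t hxd)
    have happ : (InnerProductSpace.toDual ℝ (EuclideanSpace ℝ (Fin n)))
        (gradient g (x t)) (deriv x t) = (inner ℝ (gradient g (x t)) (deriv x t) : ℝ) := rfl
    rw [happ] at h
    exact h
  have hy : ∀ t : ℝ, HasDerivAt y (-(α / 2) * y t) t := by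
    intro t
    have h1 : HasDerivAt lam (deriv lam t) t := (hlam t).hasDerivAt
    have h2 := ((hgx t).const_mul k)
    have h3 := h1.add h2
    have heq : deriv lam t + k * (inner ℝ (gradient g (x t)) (deriv x t) : ℝ)
        = -(α / 2) * (lam t + k * g (x t)) := by
      rw [hlamdyn t]; ring
    rw [heq] at h3
    exact h3
  have he : ∀ t : ℝ, HasDerivAt (fun s : ℝ => Real.exp (α / 2 * s))
      (Real.exp (α / 2 * t) * (α / 2)) t := by
    intro t
    simpa [mul_comm] using (((hasDerivAt_id t).const_mul (α / 2)).exp)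
  constructor
  · intro t
    have h := ((hy t).fun_pow 2).const_mul (1 / 2 : ℝ)
    rw [h.deriv]
    show (1 / 2 : ℝ) * (2 * (lam t + k * g (x t)) ^ (2 - 1) * (-(α / 2) * (lam t + k * g (x t))))
        = -α * ((1 / 2) * (lam t + k * g (x t)) ^ 2)
    ring
  · intro t ht
    have hw : ∀ t : ℝ, deriv (fun s => y s * Real.exp (α / 2 * s)) t = 0 := by
      intro t
      have h := (hy t).fun_mul (he t)
      rw [h.deriv]
      ring
    have hwd : Differentiable ℝ (fun s => y s * Real.exp (α / 2 * s)) :=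
      fun s => ((hy s).mul (he s)).differentiableAt
    have hconst := is_const_of_deriv_eq_zero hwd hw t 0
    have h0 : Real.exp (α / 2 * 0) = 1 := by norm_num
    rw [h0, mul_one] at hconst
    have hyt : y t = y 0 * Real.exp (-(α * t) / 2) := by
      rw [show (-(α * t) / 2 : ℝ) = -(α / 2 * t) by ring, Real.exp_neg,
        eq_mul_inv_iff_mul_eq₀ (Real.exp_ne_zero _)]
      exact hconst
    show |y t| = |y 0| * Real.exp (-(α * t) / 2)
    rw [hyt, abs_mul, abs_of_pos (Real.exp_pos _)]
end

section
/- Let f : ℝⁿ → ℝ be C² with ∇²f(x) ⪰ μI for all x (μ > 0), let A be an m×n real matrix with largest eigenvalue of AᵀA equal to q₂, and let 0 < k < μ/q₂. Then, along solutions of the target dynamics ẋ = -∇f(x) + k·Aᵀ(Ax - b), the Krasovskii function V(x) = ½ ẋᵀẋ satisfies V̇ ≤ -2γ·V with γ = μ - k·q₂ > 0; hence ‖ẋ(t)‖ decays exponentially. -/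
open Matrix

set_option maxHeartbeats 1000000 in

lemma quad_bound {N : ℕ} {B : Matrix (Fin N) (Fin N) ℝ} (hB : B.IsHermitian) {q : ℝ}
    (hq : ∀ i, hB.eigenvalues i ≤ q) (v : EuclideanSpace ℝ (Fin N)) :
    (inner ℝ ((Matrix.toEuclideanLin B) v) v : ℝ) ≤ q * ‖v‖ ^ 2 := by
  have hT := Matrix.isHermitian_iff_isSymmetric.1 hB
  have hn : Module.finrank ℝ (EuclideanSpace ℝ (Fin N)) = Fintype.card (Fin N) :=
    finrank_euclideanSpace
  set T := Matrix.toEuclideanLin B with hTdef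
  set bb := hT.eigenvectorBasis hn with hbb
  set lam := hT.eigenvalues hn with hlamdef
  have hlam : ∀ i, lam i ≤ q := by
    intro i
    have h := hq ((Fintype.equivOfCardEq (Fintype.card_fin _)) i)
    simpa [Matrix.IsHermitian.eigenvalues, Matrix.IsHermitian.eigenvalues₀] using h
  have key : (inner ℝ v (T v) : ℝ) = ∑ i, lam i * (inner ℝ (bb i) v : ℝ) ^ 2 := by
    rw [← bb.sum_inner_mul_inner v (T v)]
    refine Finset.sum_congr rfl fun i _ => ?_
    have h1 : (inner ℝ (bb i) (T v) : ℝ) = lam i * inner ℝ (bb i) v := by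
      rw [← hT (bb i) v, hT.apply_eigenvectorBasis, real_inner_smul_left]
      norm_num; rfl
    rw [h1, real_inner_comm v (bb i)]; ring
  have hvv : ∑ i, (inner ℝ (bb i) v : ℝ) ^ 2 = ‖v‖ ^ 2 := by
    rw [← real_inner_self_eq_norm_sq, ← bb.sum_inner_mul_inner v v]
    refine Finset.sum_congr rfl fun i _ => ?_
    rw [real_inner_comm v (bb i)]; ring
  rw [real_inner_comm, key, ← hvv, Finset.mul_sum]
  exact Finset.sum_le_sum fun i _ => mul_le_mul_of_nonneg_right (hlam i) (sq_nonneg _)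

set_option maxHeartbeats 1000000 in
/-- For f C² with ∇²f ⪰ μI (μ > 0), A an m×n matrix with q₂ the largest
eigenvalue of AᵀA, and 0 < k with k·q₂ < μ, along solutions of the target dynamics
ẋ = -∇f(x) + k·Aᵀ(Ax - b) the Krasovskii function V = ½ẋᵀẋ satisfies V̇ ≤ -2γV with
γ = μ - k·q₂ > 0; hence ‖ẋ(t)‖ decays exponentially. -/
theorem stmt_5 (n m : ℕ) (f : EuclideanSpace ℝ (Fin n) → ℝ) (μ : ℝ)
    (hf : ContDiff ℝ 2 f) (hμ : 0 < μ)
    (hHess : ∀ x v : EuclideanSpace ℝ (Fin n),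
      μ * ‖v‖ ^ 2 ≤ inner ℝ (fderiv ℝ (fun y => gradient f y) x v) v)
    (A : Matrix (Fin m) (Fin n) ℝ) (b : EuclideanSpace ℝ (Fin m)) (q₂ k : ℝ)
    (hq₂ : IsGreatest (Set.range (Matrix.isHermitian_conjTranspose_mul_self A).eigenvalues) q₂)
    (hk : 0 < k) (hkμ : k * q₂ < μ)
    (x : ℝ → EuclideanSpace ℝ (Fin n)) (hx : ContDiff ℝ 2 x)
    (hdyn : ∀ t : ℝ, deriv x t =
      -gradient f (x t) + k • (Matrix.toEuclideanLin Aᵀ) ((Matrix.toEuclideanLin A) (x t) - b)) :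
    (∀ t : ℝ, deriv (fun s => (1 / 2) * ‖deriv x s‖ ^ 2) t ≤
        -2 * (μ - k * q₂) * ((1 / 2) * ‖deriv x t‖ ^ 2)) ∧
    (∀ t : ℝ, 0 ≤ t → ‖deriv x t‖ ≤ ‖deriv x 0‖ * Real.exp (-(μ - k * q₂) * t)) := by
  set γ := μ - k * q₂ with hγdef
  have hγ : 0 < γ := by linarith
  set u : ℝ → EuclideanSpace ℝ (Fin n) := deriv x with hu
  -- continuous linear maps for the matrix parts
  set TA : EuclideanSpace ℝ (Fin n) →L[ℝ] EuclideanSpace ℝ (Fin m) :=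
    LinearMap.toContinuousLinearMap (Matrix.toEuclideanLin A) with hTA
  set TB : EuclideanSpace ℝ (Fin m) →L[ℝ] EuclideanSpace ℝ (Fin n) :=
    LinearMap.toContinuousLinearMap (Matrix.toEuclideanLin Aᵀ) with hTB
  have hu_eq : u = fun t => -gradient f (x t) + k • TB (TA (x t) - b) := by
    funext t
    rw [hdyn t]
    simp only [hTA, hTB, LinearMap.coe_toContinuousLinearMap']
  -- gradient f is C¹
  have hgrad : ContDiff ℝ 1 (gradient f) := by
    have h1 : ContDiff ℝ 1 (fderiv ℝ f) := hf.fderiv_right (by norm_num)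
    exact (InnerProductSpace.toDual ℝ (EuclideanSpace ℝ (Fin n))).symm.contDiff.comp h1
  have hxd : ∀ t : ℝ, HasDerivAt x (u t) t := fun t =>
    ((hx.differentiable (by norm_num)) t).hasDerivAt
  -- derivative of u
  set w : ℝ → EuclideanSpace ℝ (Fin n) := fun t =>
    -(fderiv ℝ (gradient f) (x t) (u t)) + k • TB (TA (u t)) with hw
  have hud : ∀ t : ℝ, HasDerivAt u (w t) t := by
    intro t
    rw [hu_eq]
    have h1 : HasDerivAt (fun s => gradient f (x s))
        ((fderiv ℝ (gradient f) (x t)) (u t)) t :=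
      ((hgrad.differentiable one_ne_zero (x t)).hasFDerivAt).comp_hasDerivAt t (hxd t)
    have h2 : HasDerivAt (fun s => TA (x s) - b) (TA (u t)) t :=
      (TA.hasFDerivAt.comp_hasDerivAt t (hxd t)).sub_const b
    have h3 : HasDerivAt (fun s => k • TB (TA (x s) - b)) (k • TB (TA (u t))) t :=
      (TB.hasFDerivAt.comp_hasDerivAt t h2).const_smul k
    exact h1.neg.add h3
  -- the key inner-product inequality
  have hkey : ∀ t : ℝ, (inner ℝ (w t) (u t) : ℝ) ≤ -γ * ‖u t‖ ^ 2 := by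
    intro t
    have hmat : TB (TA (u t)) = Matrix.toEuclideanLin (Aᵀ * A) (u t) := by
      simp only [hTA, hTB, LinearMap.coe_toContinuousLinearMap',
        Matrix.toEuclideanLin_apply, Matrix.mulVec_mulVec, Equiv.apply_symm_apply]
    have hAq : ∀ i, (Matrix.isHermitian_conjTranspose_mul_self A).eigenvalues i ≤ q₂ :=
      fun i => hq₂.2 ⟨i, rfl⟩
    have hAbound : (inner ℝ (Matrix.toEuclideanLin (Aᵀ * A) (u t)) (u t) : ℝ) ≤ q₂ * ‖u t‖ ^ 2 :=
      quad_bound (Matrix.isHermitian_conjTranspose_mul_self A) hAq (u t)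
    have hH := hHess (x t) (u t)
    have expand : (inner ℝ (w t) (u t) : ℝ) =
        -(inner ℝ (fderiv ℝ (gradient f) (x t) (u t)) (u t) : ℝ)
          + k * (inner ℝ (Matrix.toEuclideanLin (Aᵀ * A) (u t)) (u t) : ℝ) := by
      rw [hw]
      rw [inner_add_left, inner_neg_left, real_inner_smul_left, hmat]
    rw [expand]
    have : k * (inner ℝ (Matrix.toEuclideanLin (Aᵀ * A) (u t)) (u t) : ℝ) ≤ k * (q₂ * ‖u t‖ ^ 2) :=
      mul_le_mul_of_nonneg_left hAbound hk.le
    nlinarith [hH]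
  -- derivative of V
  have hVd : ∀ t : ℝ, HasDerivAt (fun s => (1 / 2 : ℝ) * ‖u s‖ ^ 2)
      ((inner ℝ (w t) (u t) : ℝ)) t := by
    intro t
    have h := ((hud t).inner ℝ (hud t)).const_mul (1 / 2 : ℝ)
    have heq : (fun s => (1 / 2 : ℝ) * (inner ℝ (u s) (u s) : ℝ))
        = fun s => (1 / 2 : ℝ) * ‖u s‖ ^ 2 := by
      funext s; rw [real_inner_self_eq_norm_sq]
    rw [heq] at h
    refine h.congr_deriv ?_
    rw [real_inner_comm (u t) (w t)]; ring
  constructor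
  · intro t
    have := (hVd t).deriv
    rw [this]
    calc (inner ℝ (w t) (u t) : ℝ) ≤ -γ * ‖u t‖ ^ 2 := hkey t
      _ = -2 * γ * ((1/2) * ‖u t‖ ^ 2) := by ring
  · intro t ht
    -- Gronwall via g t = ‖u t‖² exp(2γt)
    set g : ℝ → ℝ := fun s => ‖u s‖ ^ 2 * Real.exp (2 * γ * s) with hg
    have hgd : ∀ s : ℝ, HasDerivAt g
        ((2 * (inner ℝ (w s) (u s) : ℝ)) * Real.exp (2 * γ * s)
          + ‖u s‖ ^ 2 * (2 * γ * Real.exp (2 * γ * s))) s := by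
      intro s
      have hns : HasDerivAt (fun r => ‖u r‖ ^ 2) (2 * (inner ℝ (w s) (u s) : ℝ)) s := by
        have h := (hud s).inner ℝ (hud s)
        have heq : (fun r => (inner ℝ (u r) (u r) : ℝ)) = fun r => ‖u r‖ ^ 2 := by
          funext r; rw [real_inner_self_eq_norm_sq]
        rw [heq] at h
        refine h.congr_deriv ?_
        rw [real_inner_comm (u s) (w s)]; ring
      have hexp : HasDerivAt (fun r => Real.exp (2 * γ * r)) (2 * γ * Real.exp (2 * γ * s)) s := by
        have := ((hasDerivAt_id s).const_mul (2 * γ)).exp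
        simpa [mul_comm] using this
      exact hns.mul hexp
    have hmono : Antitone g := by
      apply antitone_of_deriv_nonpos (fun s => (hgd s).differentiableAt)
      intro s
      rw [(hgd s).deriv]
      have h1 := hkey s
      have h2 : (0:ℝ) < Real.exp (2 * γ * s) := Real.exp_pos _
      nlinarith
    have hg0 : g t ≤ g 0 := hmono ht
    have hexp0 : Real.exp (2 * γ * 0) = 1 := by norm_num
    rw [hg] at hg0
    simp only [hexp0, mul_one] at hg0
    have hsq : ‖u t‖ ^ 2 ≤ (‖u 0‖ * Real.exp (-γ * t)) ^ 2 := by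
      have h2 : (0:ℝ) < Real.exp (2 * γ * t) := Real.exp_pos _
      have hE : (Real.exp (-γ * t)) ^ 2 = (Real.exp (2 * γ * t))⁻¹ := by
        rw [sq, ← Real.exp_add, ← Real.exp_neg]
        ring_nf
      rw [mul_pow, hE, ← div_eq_mul_inv, le_div_iff₀ h2]
      exact hg0
    have := (pow_le_pow_iff_left₀ (norm_nonneg _)
      (mul_nonneg (norm_nonneg _) (Real.exp_pos _).le) (two_ne_zero)).1 hsq
    simpa [hγdef] using this
end
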